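/- Let 0 < L ≤ K. If u : [0,L] → ℝ is C¹ with u(0) = 0, u(L) = K and Ψ(u) = ∫₀ᴸ (u'² − 1)² dt = (K² − L²)²/L³, then u'(t) = K/L for all t ∈ [0,L]. -/

import Mathlib

open Set intervalIntegral MeasureTheory

theorem stmt_17 (L K : ℝ) (hL : 0 < L) (hLK : L ≤ K)
    (u u' : ℝ → ℝ)
    (hderiv : ∀ t ∈ Icc (0:ℝ) L, HasDerivAt u (u' t) t)
    (hcont : ContinuousOn u' (Icc (0:ℝ) L))
    (h0 : u 0 = 0) (hLval : u L = K)
    (heq : (∫ t in (0:ℝ)..L, ((u' t) ^ 2 - 1) ^ 2) =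
      (K ^ 2 - L ^ 2) ^ 2 / L ^ 3) :
    ∀ t ∈ Icc (0:ℝ) L, u' t = K / L := by
  set c := K / L with hc
  have hL0 : (0:ℝ) ≤ L := hL.le
  have hc1 : (1:ℝ) ≤ c := (one_le_div hL).mpr hLK
  have hc0 : (0:ℝ) < c := lt_of_lt_of_le one_pos hc1
  have hK0 : (0:ℝ) < K := hL.trans_le hLK
  have huIcc : uIcc (0:ℝ) L = Icc 0 L := uIcc_of_le hL0
  have hcont' : ContinuousOn u' (uIcc (0:ℝ) L) := huIcc ▸ hcont
  have hint : IntervalIntegrable u' volume 0 L := hcont'.intervalIntegrable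
  have hK : (∫ t in (0:ℝ)..L, u' t) = K := by
    rw [intervalIntegral.integral_eq_sub_of_hasDerivAt
      (fun t ht => hderiv t (huIcc ▸ ht)) hint, h0, hLval, sub_zero]
  -- integrability of all pieces
  have hcontF : ContinuousOn (fun t => ((u' t) ^ 2 - c ^ 2) ^ 2) (Icc (0:ℝ) L) := by
    fun_prop
  have hcontG : ContinuousOn (fun t => (u' t - c) ^ 2) (Icc (0:ℝ) L) := by fun_prop
  have hintF : IntervalIntegrable (fun t => ((u' t) ^ 2 - c ^ 2) ^ 2) volume 0 L :=
    (huIcc ▸ hcontF : ContinuousOn _ (uIcc (0:ℝ) L)).intervalIntegrable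
  have hintG : IntervalIntegrable (fun t => (u' t - c) ^ 2) volume 0 L :=
    (huIcc ▸ hcontG : ContinuousOn _ (uIcc (0:ℝ) L)).intervalIntegrable
  have hintuc : IntervalIntegrable (fun t => 4 * c * (c ^ 2 - 1) * (u' t - c)) volume 0 L :=
    ((hint.sub (intervalIntegrable_const)).const_mul _)
  -- key expansion
  have key : (∫ t in (0:ℝ)..L, ((u' t) ^ 2 - 1) ^ 2)
      = (∫ t in (0:ℝ)..L, ((c ^ 2 - 1) ^ 2 + 4 * c * (c ^ 2 - 1) * (u' t - c))
          + (((u' t) ^ 2 - c ^ 2) ^ 2 + 2 * (c ^ 2 - 1) * (u' t - c) ^ 2)) := by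
    apply intervalIntegral.integral_congr
    intro t _; ring
  have split : (∫ t in (0:ℝ)..L, ((u' t) ^ 2 - 1) ^ 2)
      = (∫ t in (0:ℝ)..L, ((c ^ 2 - 1) ^ 2 + 4 * c * (c ^ 2 - 1) * (u' t - c)))
        + ((∫ t in (0:ℝ)..L, ((u' t) ^ 2 - c ^ 2) ^ 2)
          + (∫ t in (0:ℝ)..L, 2 * (c ^ 2 - 1) * (u' t - c) ^ 2)) := by
    rw [key, intervalIntegral.integral_add (intervalIntegrable_const.add hintuc)
        (hintF.add (hintG.const_mul _)),
      intervalIntegral.integral_add hintF (hintG.const_mul _)]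
  have I1 : (∫ t in (0:ℝ)..L, ((c ^ 2 - 1) ^ 2 + 4 * c * (c ^ 2 - 1) * (u' t - c)))
      = (K ^ 2 - L ^ 2) ^ 2 / L ^ 3 := by
    rw [intervalIntegral.integral_add intervalIntegrable_const hintuc,
      intervalIntegral.integral_const, intervalIntegral.integral_const_mul,
      intervalIntegral.integral_sub hint intervalIntegrable_const,
      intervalIntegral.integral_const, hK]
    have hLne : L ≠ 0 := hL.ne'
    rw [hc]
    simp only [sub_zero, smul_eq_mul]
    field_simp
    ring
  have I4 : (∫ t in (0:ℝ)..L, 2 * (c ^ 2 - 1) * (u' t - c) ^ 2)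
      = 2 * (c ^ 2 - 1) * ∫ t in (0:ℝ)..L, (u' t - c) ^ 2 :=
    intervalIntegral.integral_const_mul _ _
  have hI3nonneg : 0 ≤ ∫ t in (0:ℝ)..L, ((u' t) ^ 2 - c ^ 2) ^ 2 :=
    intervalIntegral.integral_nonneg hL0 (fun t _ => sq_nonneg _)
  have hI4nonneg : 0 ≤ 2 * (c ^ 2 - 1) * ∫ t in (0:ℝ)..L, (u' t - c) ^ 2 := by
    apply mul_nonneg (by nlinarith)
      (intervalIntegral.integral_nonneg hL0 (fun t _ => sq_nonneg _))
  have hI3 : (∫ t in (0:ℝ)..L, ((u' t) ^ 2 - c ^ 2) ^ 2) = 0 := by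
    rw [heq, I1, I4] at split
    linarith
  -- from integral zero to pointwise zero
  have hae : (fun t => ((u' t) ^ 2 - c ^ 2) ^ 2)
      =ᵐ[volume.restrict (Icc (0:ℝ) L)] (fun _ => (0:ℝ)) := by
    have h1 : (fun t => ((u' t) ^ 2 - c ^ 2) ^ 2)
        =ᵐ[volume.restrict (Ioc (0:ℝ) L)] 0 := by
      refine (intervalIntegral.integral_eq_zero_iff_of_le_of_nonneg_ae hL0 ?_ hintF).mp hI3
      exact Filter.Eventually.of_forall fun t => sq_nonneg _
    rwa [Measure.restrict_congr_set Ioc_ae_eq_Icc] at h1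
  have hzero : ∀ t ∈ Icc (0:ℝ) L, ((u' t) ^ 2 - c ^ 2) ^ 2 = 0 :=
    Measure.eqOn_Icc_of_ae_eq volume hL.ne hae hcontF continuousOn_const
  have hsq : ∀ t ∈ Icc (0:ℝ) L, u' t = c ∨ u' t = -c := by
    intro t ht
    have := hzero t ht
    have h2 : (u' t - c) * (u' t + c) = 0 := by nlinarith [this]
    rcases mul_eq_zero.mp h2 with h | h
    · left; linarith
    · right; linarith
  have hne : ∀ t ∈ Icc (0:ℝ) L, u' t ≠ 0 := by
    intro t ht h
    rcases hsq t ht with h' | h' <;> rw [h] at h' <;> nlinarith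
  have h0mem : (0:ℝ) ∈ Icc (0:ℝ) L := ⟨le_refl _, hL0⟩
  rcases hsq 0 h0mem with hstart | hstart
  · -- u' 0 = c, show all equal c
    intro t ht
    rcases hsq t ht with h | h
    · exact h
    · exfalso
      have hsub : Icc (0:ℝ) t ⊆ Icc (0:ℝ) L := Icc_subset_Icc le_rfl ht.2
      have hmem : (0:ℝ) ∈ Icc (u' t) (u' 0) := by
        rw [hstart, h]; constructor <;> linarith
      obtain ⟨s, hs, hs0⟩ := intermediate_value_Icc' ht.1 (hcont.mono hsub) hmem
      exact hne s (hsub hs) hs0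
  · -- u' 0 = -c : show u' ≡ -c, contradict integral
    exfalso
    have hall : ∀ t ∈ Icc (0:ℝ) L, u' t = -c := by
      intro t ht
      rcases hsq t ht with h | h
      · exfalso
        have hsub : Icc (0:ℝ) t ⊆ Icc (0:ℝ) L := Icc_subset_Icc le_rfl ht.2
        have hmem : (0:ℝ) ∈ Icc (u' 0) (u' t) := by
          rw [hstart, h]; constructor <;> linarith
        obtain ⟨s, hs, hs0⟩ := intermediate_value_Icc ht.1 (hcont.mono hsub) hmem
        exact hne s (hsub hs) hs0
      · exact h
    have : (∫ t in (0:ℝ)..L, u' t) = ∫ t in (0:ℝ)..L, (-c : ℝ) := by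
      apply intervalIntegral.integral_congr
      intro t ht
      exact hall t (huIcc ▸ ht)
    rw [intervalIntegral.integral_const, hK, smul_eq_mul] at this
    have hcL : c * L = K := by rw [hc]; field_simp
    have h2 : K = -(c * L) := by rw [this]; ring
    linarith
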